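/- For every h ∈ (0, 1/2), the function α ↦ ρ_h(α) is strictly increasing on the interval [2h, +∞), with ρ_h(2h) = 0, and it maps [2h, +∞) bijectively onto [0, +∞); in particular ρ_h(α) → +∞ as α → +∞. -/

import Mathlib

open Real Set Filter MeasureTheory

/-- Inverse hyperbolic cosine. -/
noncomputable def arcosh (x : ℝ) : ℝ := Real.log (x + Real.sqrt (x ^ 2 - 1))

/-- The root `φ(h,α)` of the quadratic `(s² − 1) − (2hs − α)²`. -/
noncomputable def phi (h α : ℝ) : ℝ :=
  (-2 * α * h + Real.sqrt (1 - 4 * h ^ 2 + α ^ 2)) / (1 - 4 * h ^ 2)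

/-- The negative root `b(h,α)` of the quadratic `(s² − 1) − (2hs − α)²`. -/
noncomputable def bb (h α : ℝ) : ℝ :=
  -(2 * h * α + Real.sqrt (1 - 4 * h ^ 2 + α ^ 2)) / (1 - 4 * h ^ 2)

/-- The radius `ρ_h(α)` of the base circle of the rotational cmc `h` surface `H_α^h`. -/
noncomputable def rho (h α : ℝ) : ℝ := _root_.arcosh (phi h α)

/-- The derivative `u_α^h` of the profile function of `H_α^h`. -/
noncomputable def uu (h α ρ : ℝ) : ℝ :=
  (-α + 2 * h * Real.cosh ρ) /
    Real.sqrt (Real.sinh ρ ^ 2 - (-α + 2 * h * Real.cosh ρ) ^ 2)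

/-- The profile function `H_α^h` of the rotational cmc `h` surfaces of Sa Earp–Toubiana. -/
noncomputable def HH (h α ρ : ℝ) : ℝ := ∫ w in rho h α..ρ, uu h α w

section aux

lemma arcosh_one : _root_.arcosh 1 = 0 := by simp [_root_.arcosh]

lemma arcosh_cosh {y : ℝ} (hy : 0 ≤ y) : _root_.arcosh (Real.cosh y) = y := by
  have h1 : Real.cosh y ^ 2 - 1 = Real.sinh y ^ 2 := by
    have := Real.cosh_sq_sub_sinh_sq y; nlinarith
  rw [_root_.arcosh, h1, Real.sqrt_sq (Real.sinh_nonneg_iff.mpr hy), Real.cosh_add_sinh,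
    Real.log_exp]

lemma arcosh_strictMonoOn : StrictMonoOn _root_.arcosh (Set.Ici 1) := by
  intro a ha b hb hab
  simp only [Set.mem_Ici] at ha hb
  have h1 : (0:ℝ) < a + Real.sqrt (a ^ 2 - 1) := by
    have := Real.sqrt_nonneg (a ^ 2 - 1); linarith
  have h2 : a + Real.sqrt (a ^ 2 - 1) < b + Real.sqrt (b ^ 2 - 1) := by
    have : Real.sqrt (a ^ 2 - 1) ≤ Real.sqrt (b ^ 2 - 1) :=
      Real.sqrt_le_sqrt (by nlinarith)
    linarith
  exact Real.log_lt_log h1 h2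

lemma arcosh_nonneg {x : ℝ} (hx : 1 ≤ x) : 0 ≤ _root_.arcosh x := by
  apply Real.log_nonneg
  have := Real.sqrt_nonneg (x ^ 2 - 1); linarith

lemma arcosh_bijOn : Set.BijOn _root_.arcosh (Set.Ici 1) (Set.Ici 0) :=
  ⟨fun _ hx => _root_.arcosh_nonneg hx, arcosh_strictMonoOn.injOn,
    fun y hy => ⟨Real.cosh y, Real.one_le_cosh y, _root_.arcosh_cosh hy⟩⟩

lemma arcosh_tendsto : Filter.Tendsto _root_.arcosh Filter.atTop Filter.atTop := by
  apply Filter.tendsto_atTop_mono' _ _ Real.tendsto_log_atTop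
  filter_upwards [Filter.eventually_ge_atTop (1:ℝ)] with x hx
  exact Real.log_le_log (by linarith) (by have := Real.sqrt_nonneg (x ^ 2 - 1); linarith)

/-- key inequality: `2h·√(d + x²) ≤ x` for `x ≥ 2h`, strict for `x > 2h`. -/
lemma sqrt_key_le {h x : ℝ} (h0 : 0 < h) (h2 : h < 1/2) (hx : 2 * h ≤ x) :
    2 * h * Real.sqrt (1 - 4 * h ^ 2 + x ^ 2) ≤ x := by
  have hd : 0 < 1 - 4 * h ^ 2 := by nlinarith
  set s := Real.sqrt (1 - 4 * h ^ 2 + x ^ 2) with hs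
  have hs0 : 0 < s := Real.sqrt_pos.mpr (by positivity)
  have hs2 : s ^ 2 = 1 - 4 * h ^ 2 + x ^ 2 := Real.sq_sqrt (by positivity)
  have hx0 : 0 < x := lt_of_lt_of_le (by positivity) hx
  have h4 : 4 * h ^ 2 ≤ x ^ 2 := by nlinarith
  have hpa : 0 < x + 2 * h * s := by positivity
  have key : 0 ≤ (x - 2 * h * s) * (x + 2 * h * s) := by
    nlinarith [mul_nonneg hd.le (sub_nonneg.mpr h4)]
  have := (mul_nonneg_iff_of_pos_right hpa).mp key
  linarith

lemma sqrt_key_lt {h x : ℝ} (h0 : 0 < h) (h2 : h < 1/2) (hx : 2 * h < x) :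
    2 * h * Real.sqrt (1 - 4 * h ^ 2 + x ^ 2) < x := by
  have hd : 0 < 1 - 4 * h ^ 2 := by nlinarith
  set s := Real.sqrt (1 - 4 * h ^ 2 + x ^ 2) with hs
  have hs0 : 0 < s := Real.sqrt_pos.mpr (by positivity)
  have hs2 : s ^ 2 = 1 - 4 * h ^ 2 + x ^ 2 := Real.sq_sqrt (by positivity)
  have hx0 : 0 < x := lt_of_lt_of_le (by positivity) hx.le
  have h4 : 4 * h ^ 2 < x ^ 2 := by nlinarith
  have hpa : 0 < x + 2 * h * s := by positivity
  have key : 0 < (x - 2 * h * s) * (x + 2 * h * s) := by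
    nlinarith [mul_pos hd (sub_pos.mpr h4)]
  have := (mul_pos_iff_of_pos_right hpa).mp key
  linarith

lemma phi_strictMonoOn {h : ℝ} (h0 : 0 < h) (h2 : h < 1/2) :
    StrictMonoOn (phi h) (Set.Ici (2*h)) := by
  have hd : 0 < 1 - 4 * h ^ 2 := by nlinarith
  intro a ha b hb hab
  simp only [Set.mem_Ici] at ha hb
  have hda : (0:ℝ) < 1 - 4 * h ^ 2 + a ^ 2 := by positivity
  have hdb : (0:ℝ) < 1 - 4 * h ^ 2 + b ^ 2 := by positivity
  set sa := Real.sqrt (1 - 4 * h ^ 2 + a ^ 2) with hsa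
  set sb := Real.sqrt (1 - 4 * h ^ 2 + b ^ 2) with hsb
  have hsa0 : 0 < sa := Real.sqrt_pos.mpr hda
  have hsb0 : 0 < sb := Real.sqrt_pos.mpr hdb
  have hsa2 : sa ^ 2 = 1 - 4 * h ^ 2 + a ^ 2 := Real.sq_sqrt hda.le
  have hsb2 : sb ^ 2 = 1 - 4 * h ^ 2 + b ^ 2 := Real.sq_sqrt hdb.le
  have hka : 2 * h * sa ≤ a := sqrt_key_le h0 h2 ha
  have hkb : 2 * h * sb < b := sqrt_key_lt h0 h2 (lt_of_le_of_lt ha hab)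
  have key : sb - sa > 2 * h * (b - a) := by
    nlinarith [mul_pos (sub_pos.mpr hab) (add_pos hsa0 hsb0)]
  unfold phi
  rw [div_lt_div_iff_of_pos_right hd]
  linarith

lemma phi_at_left {h : ℝ} (h0 : 0 < h) (h2 : h < 1/2) : phi h (2*h) = 1 := by
  have hd : 0 < 1 - 4 * h ^ 2 := by nlinarith
  have : 1 - 4 * h ^ 2 + (2*h) ^ 2 = 1 := by ring
  rw [phi, this, Real.sqrt_one]
  rw [div_eq_iff hd.ne']
  ring

lemma phi_ge_one {h α : ℝ} (h0 : 0 < h) (h2 : h < 1/2) (hα : 2*h ≤ α) :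
    1 ≤ phi h α := by
  rcases eq_or_lt_of_le hα with heq | hlt
  · rw [← heq, phi_at_left h0 h2]
  · rw [← phi_at_left h0 h2]
    exact (phi_strictMonoOn h0 h2 Set.self_mem_Ici hα hlt).le

lemma phi_surj {h : ℝ} (h0 : 0 < h) (h2 : h < 1/2) :
    Set.SurjOn (phi h) (Set.Ici (2*h)) (Set.Ici 1) := by
  have hd : 0 < 1 - 4 * h ^ 2 := by nlinarith
  intro s hs
  simp only [Set.mem_Ici] at hs
  set t := Real.sqrt (s ^ 2 - 1) with ht
  have ht0 : 0 ≤ t := Real.sqrt_nonneg _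
  have ht2 : t ^ 2 = s ^ 2 - 1 := Real.sq_sqrt (by nlinarith)
  refine ⟨2 * h * s + t, ?_, ?_⟩
  · simp only [Set.mem_Ici]; nlinarith
  · have hsq : 1 - 4 * h ^ 2 + (2 * h * s + t) ^ 2 = (s + 2 * h * t) ^ 2 := by
      nlinarith [ht2]
    have hpos : 0 ≤ s + 2 * h * t := by nlinarith
    rw [phi, hsq, Real.sqrt_sq hpos]
    rw [div_eq_iff hd.ne']
    ring

lemma phi_tendsto {h : ℝ} (h0 : 0 < h) (h2 : h < 1/2) :
    Filter.Tendsto (phi h) Filter.atTop Filter.atTop := by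
  have hd : 0 < 1 - 4 * h ^ 2 := by nlinarith
  have hc : 0 < (1 - 2*h) / (1 - 4 * h ^ 2) := by
    apply div_pos (by linarith) hd
  apply Filter.tendsto_atTop_mono' _ _
    (Filter.Tendsto.const_mul_atTop hc Filter.tendsto_id)
  filter_upwards [Filter.eventually_ge_atTop (0:ℝ)] with x hx
  have hsq : x ≤ Real.sqrt (1 - 4 * h ^ 2 + x ^ 2) := by
    have h1 : Real.sqrt (x ^ 2) ≤ Real.sqrt (1 - 4 * h ^ 2 + x ^ 2) :=
      Real.sqrt_le_sqrt (by linarith)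
    rwa [Real.sqrt_sq hx] at h1
  rw [phi, id_eq, show (1 - 2*h) / (1 - 4 * h ^ 2) * x = ((1-2*h)*x) / (1 - 4*h^2) by ring,
    div_le_div_iff_of_pos_right hd]
  nlinarith [mul_nonneg h0.le hx]

end aux


/-- α ↦ ρ_h(α) is strictly increasing on [2h, ∞), vanishes at 2h,
maps [2h, ∞) bijectively onto [0, ∞), and tends to +∞. -/
theorem stmt_3 (h : ℝ) (hh : h ∈ Set.Ioo (0 : ℝ) (1 / 2)) :
    StrictMonoOn (rho h) (Set.Ici (2 * h)) ∧
    rho h (2 * h) = 0 ∧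
    Set.BijOn (rho h) (Set.Ici (2 * h)) (Set.Ici 0) ∧
    Filter.Tendsto (rho h) Filter.atTop Filter.atTop := by
  obtain ⟨h0, h2⟩ := hh
  have h2' : h < 1/2 := h2
  have phiBij : Set.BijOn (phi h) (Set.Ici (2*h)) (Set.Ici 1) :=
    ⟨fun x hx => phi_ge_one h0 h2' hx, (phi_strictMonoOn h0 h2').injOn,
      phi_surj h0 h2'⟩
  refine ⟨?_, ?_, ?_, ?_⟩
  · intro a ha b hb hab
    exact arcosh_strictMonoOn (phi_ge_one h0 h2' ha) (phi_ge_one h0 h2' hb)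
      (phi_strictMonoOn h0 h2' ha hb hab)
  · show _root_.arcosh (phi h (2*h)) = 0
    rw [phi_at_left h0 h2', arcosh_one]
  · exact _root_.arcosh_bijOn.comp phiBij
  · exact arcosh_tendsto.comp (phi_tendsto h0 h2')
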